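/- Let G be the simple graph on vertex set {0, 1, 2, 3, 4, 5, 6} whose edge set consists of the heptagon edges {{0,1}, {1,2}, {2,3}, {3,4}, {4,5}, {5,6}, {6,0}} together with the chords {{0,2}, {0,3}, {3,5}, {0,5}} (a triangulation of the heptagon, hence a maximal outerplanar graph of order 7). Then for every integer k ≥ 0, G is k-edge magic if and only if k ≡ 2 (mod 7). -/

import Mathlib

open scoped Classical in
/-- A finite simple graph `G` on a finite vertex type is `k`-edge magic if there is a
labeling of its edges that is a bijection onto `{k, k+1, ..., k+q-1}` (where `q` is the
number of edges) such that all the induced vertex sums (the sum of the labels of the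
edges incident to a vertex) are congruent modulo the number of vertices. -/
def IsKEdgeMagic {V : Type*} [Fintype V] (G : SimpleGraph V) (k : ℕ) : Prop :=
  ∃ f : Sym2 V → ℕ,
    Set.BijOn f G.edgeSet ((fun i => k + i) '' Set.Iio G.edgeFinset.card) ∧
    ∃ c : ZMod (Fintype.card V),
      ∀ v : V, ((∑ e ∈ G.incidenceFinset v, f e : ℕ) : ZMod (Fintype.card V)) = c

/-- A concrete simple graph on `Fin 7`. -/
def G5 : SimpleGraph (Fin 7) where
  Adj a b := a ≠ b ∧ s(a,b) ∈ ({s(0,1), s(1,2), s(2,3), s(3,4), s(4,5), s(5,6), s(6,0), s(0,2), s(0,3), s(3,5), s(0,5)} : Finset (Sym2 (Fin 7)))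
  symm := ⟨fun a b h => ⟨h.1.symm, by rw [show s(b,a) = s(a,b) from Sym2.eq_swap]; exact h.2⟩⟩
  loopless := ⟨fun a h => h.1 rfl⟩

def S5 : Finset (Sym2 (Fin 7)) :=
  {s(0,1), s(1,2), s(2,3), s(3,4), s(4,5), s(5,6), s(6,0), s(0,2), s(0,3), s(3,5), s(0,5)}

def base5 : Sym2 (Fin 7) → ℕ := fun e =>
  if e = s(0,1) then 2 else if e = s(1,2) then 3 else if e = s(2,3) then 4
  else if e = s(3,4) then 9 else if e = s(4,5) then 10 else if e = s(5,6) then 11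
  else if e = s(6,0) then 8 else if e = s(0,2) then 5 else if e = s(0,3) then 6
  else if e = s(3,5) then 7 else if e = s(0,5) then 12 else 0

lemma edgeSet_eq5 : G5.edgeSet = ↑S5 := by
  ext e
  induction e using Sym2.ind with
  | _ a b =>
    rw [SimpleGraph.mem_edgeSet]
    show (a ≠ b ∧ s(a,b) ∈ S5) ↔ _
    rw [Finset.mem_coe]
    revert a b; decide

lemma edgeFinset_eq5 [Fintype G5.edgeSet] : G5.edgeFinset = S5 := by
  ext e
  rw [SimpleGraph.mem_edgeFinset, edgeSet_eq5, Finset.mem_coe]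

lemma inc_eq5 [Fintype G5.edgeSet] (v : Fin 7) [Fintype (G5.neighborSet v)] :
    G5.incidenceFinset v = S5.filter (fun e => v ∈ e) := by
  rw [SimpleGraph.incidenceFinset_eq_filter, edgeFinset_eq5]

lemma edgeFinset_eq5' (instE : Fintype G5.edgeSet) :
    @SimpleGraph.edgeFinset _ G5 instE = S5 := edgeFinset_eq5

lemma inc_eq5' (v : Fin 7) (instN : Fintype (G5.neighborSet v)) :
    @SimpleGraph.incidenceFinset _ G5 v instN _ = S5.filter (fun e => v ∈ e) := by
  classical
  exact inc_eq5 v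

section Sums
variable (f : Sym2 (Fin 7) → ℕ)

lemma sumS5 : ∑ e ∈ S5, f e
    = f s(0,1) + (f s(1,2) + (f s(2,3) + (f s(3,4) + (f s(4,5) + (f s(5,6) +
      (f s(6,0) + (f s(0,2) + (f s(0,3) + (f s(3,5) + f s(0,5)))))))))) := by
  show ∑ e ∈ ({s(0,1), s(1,2), s(2,3), s(3,4), s(4,5), s(5,6), s(6,0), s(0,2), s(0,3), s(3,5), s(0,5)} : Finset (Sym2 (Fin 7))), f e = _
  rw [Finset.sum_insert (by decide), Finset.sum_insert (by decide),
    Finset.sum_insert (by decide), Finset.sum_insert (by decide),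
    Finset.sum_insert (by decide), Finset.sum_insert (by decide),
    Finset.sum_insert (by decide), Finset.sum_insert (by decide),
    Finset.sum_insert (by decide), Finset.sum_insert (by decide), Finset.sum_singleton]

lemma sumF0 : ∑ e ∈ S5.filter (fun e => (0 : Fin 7) ∈ e), f e
    = f s(0,1) + (f s(6,0) + (f s(0,2) + (f s(0,3) + f s(0,5)))) := by
  rw [show S5.filter (fun e => (0 : Fin 7) ∈ e)
      = ({s(0,1), s(6,0), s(0,2), s(0,3), s(0,5)} : Finset (Sym2 (Fin 7))) from by decide]
  rw [Finset.sum_insert (by decide), Finset.sum_insert (by decide),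
    Finset.sum_insert (by decide), Finset.sum_insert (by decide), Finset.sum_singleton]

lemma sumF1 : ∑ e ∈ S5.filter (fun e => (1 : Fin 7) ∈ e), f e = f s(0,1) + f s(1,2) := by
  rw [show S5.filter (fun e => (1 : Fin 7) ∈ e)
      = ({s(0,1), s(1,2)} : Finset (Sym2 (Fin 7))) from by decide]
  rw [Finset.sum_insert (by decide), Finset.sum_singleton]

lemma sumF2 : ∑ e ∈ S5.filter (fun e => (2 : Fin 7) ∈ e), f e
    = f s(1,2) + (f s(2,3) + f s(0,2)) := by
  rw [show S5.filter (fun e => (2 : Fin 7) ∈ e)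
      = ({s(1,2), s(2,3), s(0,2)} : Finset (Sym2 (Fin 7))) from by decide]
  rw [Finset.sum_insert (by decide), Finset.sum_insert (by decide), Finset.sum_singleton]

lemma sumF3 : ∑ e ∈ S5.filter (fun e => (3 : Fin 7) ∈ e), f e
    = f s(2,3) + (f s(3,4) + (f s(0,3) + f s(3,5))) := by
  rw [show S5.filter (fun e => (3 : Fin 7) ∈ e)
      = ({s(2,3), s(3,4), s(0,3), s(3,5)} : Finset (Sym2 (Fin 7))) from by decide]
  rw [Finset.sum_insert (by decide), Finset.sum_insert (by decide),
    Finset.sum_insert (by decide), Finset.sum_singleton]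

lemma sumF4 : ∑ e ∈ S5.filter (fun e => (4 : Fin 7) ∈ e), f e = f s(3,4) + f s(4,5) := by
  rw [show S5.filter (fun e => (4 : Fin 7) ∈ e)
      = ({s(3,4), s(4,5)} : Finset (Sym2 (Fin 7))) from by decide]
  rw [Finset.sum_insert (by decide), Finset.sum_singleton]

lemma sumF5 : ∑ e ∈ S5.filter (fun e => (5 : Fin 7) ∈ e), f e
    = f s(4,5) + (f s(5,6) + (f s(3,5) + f s(0,5))) := by
  rw [show S5.filter (fun e => (5 : Fin 7) ∈ e)
      = ({s(4,5), s(5,6), s(3,5), s(0,5)} : Finset (Sym2 (Fin 7))) from by decide]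
  rw [Finset.sum_insert (by decide), Finset.sum_insert (by decide),
    Finset.sum_insert (by decide), Finset.sum_singleton]

lemma sumF6 : ∑ e ∈ S5.filter (fun e => (6 : Fin 7) ∈ e), f e = f s(5,6) + f s(6,0) := by
  rw [show S5.filter (fun e => (6 : Fin 7) ∈ e)
      = ({s(5,6), s(6,0)} : Finset (Sym2 (Fin 7))) from by decide]
  rw [Finset.sum_insert (by decide), Finset.sum_singleton]

end Sums

lemma b01 : base5 s(0,1) = 2 := by decide
lemma b12 : base5 s(1,2) = 3 := by decide
lemma b23 : base5 s(2,3) = 4 := by decide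
lemma b34 : base5 s(3,4) = 9 := by decide
lemma b45 : base5 s(4,5) = 10 := by decide
lemma b56 : base5 s(5,6) = 11 := by decide
lemma b60 : base5 s(6,0) = 8 := by decide
lemma b02 : base5 s(0,2) = 5 := by decide
lemma b03 : base5 s(0,3) = 6 := by decide
lemma b35 : base5 s(3,5) = 7 := by decide
lemma b05 : base5 s(0,5) = 12 := by decide

theorem main5 (k : ℕ) (instE : Fintype G5.edgeSet)
    (instN : ∀ v : Fin 7, Fintype (G5.neighborSet v)) :
    (∃ f : Sym2 (Fin 7) → ℕ,
      Set.BijOn f G5.edgeSet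
        ((fun i => k + i) '' Set.Iio (@SimpleGraph.edgeFinset _ G5 instE).card) ∧
      ∃ c : ZMod (Fintype.card (Fin 7)),
        ∀ v : Fin 7, ((∑ e ∈ @SimpleGraph.incidenceFinset _ G5 v (instN v) _, f e : ℕ)
          : ZMod (Fintype.card (Fin 7))) = c)
    ↔ k ≡ 2 [MOD 7] := by
  rw [show (@SimpleGraph.edgeFinset _ G5 instE).card = 11 from by
    rw [edgeFinset_eq5' instE]; decide]
  constructor
  · rintro ⟨f, hbij, c, hc⟩
    rw [edgeSet_eq5] at hbij
    rw [show ((fun i => k + i) '' Set.Iio 11 : Set ℕ)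
        = ↑((Finset.range 11).image (fun i => k + i)) from by
      rw [Finset.coe_image, Finset.coe_range]] at hbij
    have hc' : ∀ v : Fin 7, ((∑ e ∈ S5.filter (fun e => v ∈ e), f e : ℕ)
        : ZMod (Fintype.card (Fin 7))) = c := fun v => by
      rw [← inc_eq5' v (instN v)]; exact hc v
    have hT : ∑ e ∈ S5, f e = 11 * k + 55 := by
      have h1 : ∑ e ∈ S5, f e = ∑ x ∈ (Finset.range 11).image (fun i => k + i), x :=
        Finset.sum_nbij (i := f) (fun a ha => hbij.mapsTo ha) hbij.injOn hbij.surjOn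
          (fun a _ => rfl)
      rw [h1, Finset.sum_image (by intro x _ y _ h; have h : k + x = k + y := h; omega)]
      rw [Finset.sum_add_distrib, Finset.sum_const, Finset.card_range, smul_eq_mul,
        show ∑ i ∈ Finset.range 11, i = 55 from by decide]
    have hdouble : ∑ v : Fin 7, ∑ e ∈ S5.filter (fun e => v ∈ e), f e
        = 2 * ∑ e ∈ S5, f e := by
      rw [Fin.sum_univ_seven]
      rw [sumF0, sumF1, sumF2, sumF3, sumF4, sumF5, sumF6, sumS5]
      ring
    have hsum0 : ((∑ v : Fin 7, ∑ e ∈ S5.filter (fun e => v ∈ e), f e : ℕ)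
        : ZMod (Fintype.card (Fin 7))) = 0 := by
      rw [Nat.cast_sum]
      simp only [hc']
      rw [Finset.sum_const, Finset.card_univ, nsmul_eq_mul, ZMod.natCast_self, zero_mul]
    rw [hdouble, hT] at hsum0
    have hdvd : Fintype.card (Fin 7) ∣ 2 * (11 * k + 55) :=
      (ZMod.natCast_eq_zero_iff _ _).mp hsum0
    simp only [Fintype.card_fin] at hdvd
    show k % 7 = 2 % 7
    omega
  · intro hk
    have hk' : k % 7 = 2 := hk
    refine ⟨fun e => (k - 2) + base5 e, ?_, ?_⟩
    · rw [edgeSet_eq5]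
      have himg : (fun e => (k - 2) + base5 e) '' ↑S5 = (fun i => k + i) '' Set.Iio 11 := by
        rw [← Finset.coe_range, ← Finset.coe_image, ← Finset.coe_image, Finset.coe_inj]
        rw [show (Finset.range 11 : Finset ℕ) = {0,1,2,3,4,5,6,7,8,9,10} from by decide]
        show (S5.image fun e => (k - 2) + base5 e) = _
        rw [show S5 = ({s(0,1), s(1,2), s(2,3), s(3,4), s(4,5), s(5,6), s(6,0), s(0,2), s(0,3), s(3,5), s(0,5)} : Finset (Sym2 (Fin 7))) from rfl]
        simp only [Finset.image_insert, Finset.image_singleton, b01, b12, b23, b34, b45,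
          b56, b60, b02, b03, b35, b05]
        ext n
        simp only [Finset.mem_insert, Finset.mem_singleton]
        omega
      have hinj : Set.InjOn (fun e => (k - 2) + base5 e) ↑S5 := by
        have key : ∀ a ∈ S5, ∀ b ∈ S5, base5 a = base5 b → a = b := by decide
        intro a ha b hb h
        have h' : k - 2 + base5 a = k - 2 + base5 b := h
        exact key a (Finset.mem_coe.mp ha) b (Finset.mem_coe.mp hb) (by omega)
      exact himg ▸ hinj.bijOn_image
    · refine ⟨(5 : ZMod (Fintype.card (Fin 7))), fun v => ?_⟩
      rw [show (5 : ZMod (Fintype.card (Fin 7))) = ((5 : ℕ) : ZMod (Fintype.card (Fin 7)))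
        from by norm_cast, ZMod.natCast_eq_natCast_iff]
      simp only [Fintype.card_fin]
      rw [inc_eq5' v (instN v), Finset.sum_add_distrib, Finset.sum_const, smul_eq_mul]
      have hbase : ∀ v : Fin 7, (∑ e ∈ S5.filter (fun e => v ∈ e), base5 e) % 7 = 5 % 7 := by
        decide
      have hk0 : (k - 2) % 7 = 0 % 7 := by omega
      exact (Nat.ModEq.add (Nat.ModEq.mul_left _ hk0) (hbase v)).trans (by simpa using Nat.ModEq.refl 5)

theorem kEdgeMagic_iff_5 (k : ℕ) : IsKEdgeMagic G5 k ↔ k ≡ 2 [MOD 7] := by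
  unfold IsKEdgeMagic
  exact main5 k _ _
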